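/- Universal approximation by activated MPS: let σ : ℝ → ℝ be continuous and bounded with σ(t) → 0 as t → −∞ and σ(t) → C as t → +∞, where C ≠ 0. Then the MPS network class M(σ) is dense in C([0,1]ⁿ, ℝ) with respect to the supremum norm: for every continuous f : [0,1]ⁿ → ℝ and every ε > 0 there exist L ∈ ℕ, coefficients c₁,…,c_L ∈ ℝ and multilinear polynomials p₁,…,p_L on ℝⁿ such that sup_{x ∈ [0,1]ⁿ} |Σ_{l=1}^{L} c_l σ(p_l(x)) − f(x)| < ε. -/

import Mathlib

open Filter Finset
set_option maxHeartbeats 1000000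

/-- A multilinear polynomial on `ℝⁿ`: `p(x) = Σ_{s ∈ {0,1}ⁿ} W_s ∏_{i : s i = 1} xᵢ`.
These are exactly the contractions of an MPS whose site kernel maps are
`φ(xᵢ) = (xᵢ, 1)`. -/
def IsMultilinearPoly {n : ℕ} (p : (Fin n → ℝ) → ℝ) : Prop :=
  ∃ W : (Fin n → Bool) → ℝ,
    ∀ x : Fin n → ℝ,
      p x = ∑ s : Fin n → Bool, W s * ∏ i : Fin n, if s i then x i else 1

lemma mlp_const {n : ℕ} (c : ℝ) : IsMultilinearPoly (fun _ : Fin n → ℝ => c) := by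
  refine ⟨fun s => if s = (fun _ => false) then c else 0, fun x => ?_⟩
  simp only [ite_mul, zero_mul]
  rw [Finset.sum_ite_eq' Finset.univ (fun _ => false)]
  simp

lemma mlp_coord {n : ℕ} (i : Fin n) (a : ℝ) :
    IsMultilinearPoly (fun x : Fin n → ℝ => a * x i) := by
  refine ⟨fun s => if s = (fun j => decide (j = i)) then a else 0, fun x => ?_⟩
  simp only [ite_mul, zero_mul]
  rw [Finset.sum_ite_eq' Finset.univ (fun j => decide (j = i))]
  simp

lemma mlp_add {n : ℕ} {p q : (Fin n → ℝ) → ℝ} (hp : IsMultilinearPoly p)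
    (hq : IsMultilinearPoly q) : IsMultilinearPoly (fun x => p x + q x) := by
  obtain ⟨W1, h1⟩ := hp
  obtain ⟨W2, h2⟩ := hq
  refine ⟨fun s => W1 s + W2 s, fun x => ?_⟩
  simp [h1, h2, add_mul, Finset.sum_add_distrib]

lemma mlp_affine {n : ℕ} (a : Fin n → ℝ) (b : ℝ) :
    IsMultilinearPoly (fun x : Fin n → ℝ => (∑ i, a i * x i) + b) := by
  have h : ∀ s : Finset (Fin n),
      IsMultilinearPoly (fun x : Fin n → ℝ => ∑ i ∈ s, a i * x i) := by
    intro s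
    induction s using Finset.induction with
    | empty => simpa using mlp_const (n := n) 0
    | insert j s' hns ih =>
      have := mlp_add (mlp_coord j (a j)) ih
      refine (Exists.imp (fun W hW x => ?_) this)
      simp only [Finset.sum_insert hns]; exact hW x
  exact mlp_add (h Finset.univ) (mlp_const b)

lemma one_dim (σ : ℝ → ℝ) (M : ℝ) (hM : ∀ t, |σ t| ≤ M)
    (C : ℝ) (hC : C ≠ 0)
    (hbot : Filter.Tendsto σ Filter.atBot (nhds 0))
    (htop : Filter.Tendsto σ Filter.atTop (nhds C))
    (g : ℝ → ℝ) (A B : ℝ) (hAB : A < B) (hg : ContinuousOn g (Set.Icc A B))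
    (ε : ℝ) (hε : 0 < ε) :
    ∃ (L : ℕ) (c a b : Fin L → ℝ),
      ∀ t ∈ Set.Icc A B, |(∑ l, c l * σ (a l * t + b l)) - g t| ≤ ε := by
  have hCpos : 0 < |C| := abs_pos.mpr hC
  have hM0 : 0 ≤ M := le_trans (abs_nonneg _) (hM 0)
  set P : ℝ := M + 2 * |C| with hPdef
  have hP : 0 < P := by positivity
  set ε₁ : ℝ := ε * |C| / (4 * P) with hε₁def
  have hε₁ : 0 < ε₁ := by positivity
  -- uniform continuity
  have hUC := (isCompact_Icc (a := A) (b := B)).uniformContinuousOn_of_continuous hg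
  obtain ⟨δ₀, hδ₀, hδ₀'⟩ := (Metric.uniformContinuousOn_iff).mp hUC ε₁ hε₁
  -- grid
  set N : ℕ := ⌈(B - A) / δ₀⌉₊ + 1 with hNdef
  have hN1 : 1 ≤ N := Nat.le_add_left 1 _
  have hNpos : (0 : ℝ) < N := by positivity
  set h : ℝ := (B - A) / N with hhdef
  have hh : 0 < h := div_pos (by linarith) hNpos
  have hNh : (N : ℝ) * h = B - A := by rw [hhdef]; field_simp [hNpos.ne']
  clear_value N
  have hhδ : h < δ₀ := by
    rw [hhdef, div_lt_iff₀ hNpos]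
    have h1 : (B - A) / δ₀ ≤ (⌈(B - A) / δ₀⌉₊ : ℝ) := Nat.le_ceil _
    have h2 : (⌈(B - A) / δ₀⌉₊ : ℝ) < N := by
      rw [hNdef]; push_cast; linarith
    calc B - A = (B - A) / δ₀ * δ₀ := by field_simp
    _ < (N : ℝ) * δ₀ := by
        apply mul_lt_mul_of_pos_right _ hδ₀
        linarith
    _ = δ₀ * N := by ring
  clear_value h
  -- nodes in the interval
  have hnode : ∀ j : ℕ, j ≤ N → A + (j : ℝ) * h ∈ Set.Icc A B := by
    intro j hj
    constructor
    · nlinarith [hh.le, (Nat.cast_nonneg j : (0:ℝ) ≤ j)]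
    · have : (j : ℝ) * h ≤ (N : ℝ) * h := by
        apply mul_le_mul_of_nonneg_right _ hh.le
        exact_mod_cast hj
      linarith [hNh]
  -- jumps
  set d : ℕ → ℝ := fun j => g (A + ((j : ℝ) + 1) * h) - g (A + (j : ℝ) * h) with hddef
  clear_value d
  have hd : ∀ j : ℕ, j < N → |d j| ≤ ε₁ := by
    intro j hj
    have h1 : A + ((j : ℝ) + 1) * h ∈ Set.Icc A B := by
      have := hnode (j + 1) hj
      push_cast at this; convert this using 2
    have h2 : A + (j : ℝ) * h ∈ Set.Icc A B := hnode j hj.le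
    have hdist : dist (A + ((j : ℝ) + 1) * h) (A + (j : ℝ) * h) < δ₀ := by
      rw [Real.dist_eq]
      rw [abs_of_nonneg (by nlinarith)]
      nlinarith
    have := hδ₀' _ h1 _ h2 hdist
    rw [Real.dist_eq] at this
    rw [hddef]
    exact this.le
  -- tail control
  set ε₃ : ℝ := ε * |C| / (4 * N * (ε₁ + 1)) with hε₃def
  have hε₃ : 0 < ε₃ := by positivity
  obtain ⟨T₁, hT₁⟩ := (Metric.tendsto_atTop.mp htop) ε₃ hε₃
  have hbot' : Filter.Tendsto (fun u => σ (-u)) Filter.atTop (nhds 0) :=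
    hbot.comp tendsto_neg_atTop_atBot
  obtain ⟨T₂, hT₂⟩ := (Metric.tendsto_atTop.mp hbot') ε₃ hε₃
  -- constant term
  set ε₄ : ℝ := ε * |C| / (4 * (|g A| + 1)) with hε₄def
  have hε₄ : 0 < ε₄ := by positivity
  obtain ⟨T₄, hT₄⟩ := (Metric.tendsto_atTop.mp htop) ε₄ hε₄
  have hβ : |σ T₄ - C| ≤ ε₄ := by
    have := hT₄ T₄ le_rfl; rw [Real.dist_eq] at this; exact this.le
  -- slope
  set δ : ℝ := h / 2 with hδdef
  have hδpos : 0 < δ := by positivity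
  set lam : ℝ := (|T₁| + |T₂| + 1) / δ with hlamdef
  have hlam : 0 < lam := by positivity
  have hlamδ : lam * δ = |T₁| + |T₂| + 1 := by rw [hlamdef]; field_simp [hδpos.ne']
  clear_value δ lam
  have hfar_top : ∀ u : ℝ, δ ≤ u → |σ (lam * u) - C| ≤ ε₃ := by
    intro u hu
    have h1 : lam * δ ≤ lam * u := mul_le_mul_of_nonneg_left hu hlam.le
    have h2 : T₁ ≤ lam * u := by
      have := le_abs_self T₁; rw [hlamδ] at h1
      linarith [abs_nonneg T₂]
    have := hT₁ _ h2; rw [Real.dist_eq] at this; exact this.le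
  have hfar_bot : ∀ u : ℝ, u ≤ -δ → |σ (lam * u)| ≤ ε₃ := by
    intro u hu
    have h1 : lam * δ ≤ lam * (-u) := mul_le_mul_of_nonneg_left (by linarith) hlam.le
    have h2 : T₂ ≤ -(lam * u) := by
      have := le_abs_self T₂; rw [hlamδ] at h1
      nlinarith [abs_nonneg T₁]
    have := hT₂ _ h2
    simp only [neg_neg, Real.dist_eq, sub_zero] at this
    exact this.le
  -- the network
  refine ⟨N + 1, Fin.cons (g A / C) (fun j : Fin N => d j / C),
    Fin.cons 0 (fun _ : Fin N => lam),
    Fin.cons T₄ (fun j : Fin N => -lam * (A + ((j : ℝ) + 1) * h)), ?_⟩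
  intro t ht
  obtain ⟨htA, htB⟩ := ht
  -- the sum splits
  rw [Fin.sum_univ_succ]
  simp only [Fin.cons_zero, Fin.cons_succ, zero_mul, zero_add]
  rw [Fin.sum_univ_eq_sum_range
    (fun j => d j / C * σ (lam * t + -lam * (A + ((j:ℝ) + 1) * h)))]
  -- the floor index
  set k : ℕ := ⌊(t - A) / h⌋₊ with hkdef
  have hkval : (k:ℝ) = ⌊(t - A) / h⌋₊ := by rw [hkdef]
  have htA' : 0 ≤ (t - A) / h := div_nonneg (by linarith) hh.le
  have hkN : k ≤ N := by
    have h1 : (t - A) / h ≤ (N : ℝ) := by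
      rw [div_le_iff₀ hh]; linarith [hNh]
    calc k ≤ ⌊(N : ℝ)⌋₊ := Nat.floor_le_floor h1
    _ = N := Nat.floor_natCast N
  have hklow : (k : ℝ) * h ≤ t - A := by
    have := Nat.floor_le htA'
    rw [← hkdef] at this
    calc (k : ℝ) * h ≤ (t - A) / h * h := mul_le_mul_of_nonneg_right this hh.le
    _ = t - A := by field_simp
  have hkhigh : t - A < ((k : ℝ) + 1) * h := by
    have := Nat.lt_floor_add_one ((t - A) / h)
    rw [← hkdef] at this
    calc t - A = (t - A) / h * h := by field_simp
    _ < ((k : ℝ) + 1) * h := by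
        apply mul_lt_mul_of_pos_right _ hh
        exact_mod_cast this
  clear_value k
  -- indicator characterization
  set I : ℕ → ℝ := fun j => if A + ((j : ℝ) + 1) * h ≤ t then 1 else 0 with hIdef
  have hI : ∀ j : ℕ, I j = if j < k then 1 else 0 := by
    intro j
    have hiff : (A + ((j : ℝ) + 1) * h ≤ t) ↔ (j < k) := by
      constructor
      · intro hle
        have hx : ((j : ℝ) + 1) ≤ (t - A) / h := by
          rw [le_div_iff₀ hh]; linarith
        have hx2 : (j + 1 : ℕ) ≤ k := by
          rw [hkdef]; apply Nat.le_floor; push_cast; linarith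
        omega
      · intro hlt
        have hx : (j + 1 : ℕ) ≤ k := hlt
        have h1 : ((j : ℝ) + 1) ≤ (k : ℝ) := by exact_mod_cast hx
        nlinarith
    rw [hIdef]
    simp only [hiff]
  -- telescoping step sum
  have hstep_sum : ∑ j ∈ Finset.range N, d j * I j = g (A + (k : ℝ) * h) - g A := by
    have : ∀ j ∈ Finset.range N, d j * I j = if j ∈ Finset.range k then d j else 0 := by
      intro j hj
      rw [hI j]
      simp only [Finset.mem_range]
      split <;> simp
    rw [Finset.sum_congr rfl this, Finset.sum_ite_mem]
    have hinter : Finset.range N ∩ Finset.range k = Finset.range k := by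
      ext j
      simp only [Finset.mem_inter, Finset.mem_range]
      omega
    rw [hinter]
    have hts := Finset.sum_range_sub (fun j : ℕ => g (A + (j : ℝ) * h)) k
    push_cast at hts
    calc ∑ i ∈ Finset.range k, d i
        = ∑ i ∈ Finset.range k, (g (A + ((i:ℝ) + 1) * h) - g (A + (i:ℝ) * h)) := by
          apply Finset.sum_congr rfl; intro j _; rw [hddef]
    _ = g (A + (k : ℝ) * h) - g A := by
          rw [hts]; norm_num
  -- nearness of the step value
  have hnodek : A + (k : ℝ) * h ∈ Set.Icc A B := hnode k hkN
  have hstep_close : |g (A + (k : ℝ) * h) - g t| ≤ ε₁ := by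
    have hdist : dist (A + (k : ℝ) * h) t < δ₀ := by
      rw [Real.dist_eq, abs_of_nonpos (by linarith)]
      linarith
    have := hδ₀' _ hnodek t ⟨htA, htB⟩ hdist
    rw [Real.dist_eq] at this
    exact this.le
  -- per-term error bound
  have hterm : ∀ j ∈ Finset.range N,
      |d j / C * σ (lam * t + -lam * (A + ((j:ℝ) + 1) * h)) - d j * I j|
        ≤ if |t - (A + ((j:ℝ) + 1) * h)| < δ then ε₁ * (M + |C|) / |C|
          else ε₁ * ε₃ / |C| := by
    intro j hj
    rw [Finset.mem_range] at hj
    set u : ℝ := t - (A + ((j:ℝ) + 1) * h) with hudef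
    have harg : lam * t + -lam * (A + ((j:ℝ) + 1) * h) = lam * u := by
      rw [hudef]; ring
    rw [harg]
    have hkey : d j / C * σ (lam * u) - d j * I j
        = d j / C * (σ (lam * u) - C * I j) := by
      field_simp
    rw [hkey, abs_mul, abs_div]
    split
    next hnear =>
      have hdj : |d j| ≤ ε₁ := hd j hj
      have hσb : |σ (lam * u) - C * I j| ≤ M + |C| := by
        have h1 : |C * I j| ≤ |C| := by
          rw [hI j]
          split <;> simp
        calc |σ (lam * u) - C * I j| ≤ |σ (lam * u)| + |C * I j| := by
              rw [sub_eq_add_neg]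
              exact (abs_add_le _ _).trans (by rw [abs_neg])
        _ ≤ M + |C| := add_le_add (hM _) h1
      calc |d j| / |C| * |σ (lam * u) - C * I j|
          ≤ ε₁ / |C| * (M + |C|) := by
            apply mul_le_mul (by gcongr) hσb (abs_nonneg _) (by positivity)
      _ = ε₁ * (M + |C|) / |C| := by ring
    next hfar =>
      push_neg at hfar
      have hσs : |σ (lam * u) - C * I j| ≤ ε₃ := by
        rcases le_or_gt δ u with hu | hu
        · have hIj : I j = 1 := by
            have hc : A + ((j:ℝ) + 1) * h ≤ t := by
              rw [hudef] at hu; linarith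
            simp only [hIdef, if_pos hc]
          rw [hIj, mul_one]
          exact hfar_top u hu
        · have hu' : u ≤ -δ := by
            rcases le_or_gt u (-δ) with h' | h'
            · exact h'
            · exfalso
              have : |u| < δ := abs_lt.mpr ⟨by linarith, by linarith⟩
              rw [hudef] at this
              exact absurd this (not_lt.mpr hfar)
          have hIj : I j = 0 := by
            have hc : ¬ (A + ((j:ℝ) + 1) * h ≤ t) := by
              rw [hudef] at hu'
              intro hcon; nlinarith
            simp only [hIdef, if_neg hc]
          rw [hIj, mul_zero, sub_zero]
          exact hfar_bot u hu'
      have hdj : |d j| ≤ ε₁ := hd j hj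
      calc |d j| / |C| * |σ (lam * u) - C * I j|
          ≤ ε₁ / |C| * ε₃ := by
            apply mul_le_mul (by gcongr) hσs (abs_nonneg _) (by positivity)
      _ = ε₁ * ε₃ / |C| := by ring
  -- sum of per-term bounds
  have hnear_card :
      ((Finset.range N).filter
        (fun j : ℕ => |t - (A + ((j:ℝ) + 1) * h)| < δ)).card ≤ 1 := by
    rw [Finset.card_le_one]
    intro j1 hj1 j2 hj2
    rw [Finset.mem_filter] at hj1 hj2
    by_contra hne
    have hsep : (1 : ℝ) ≤ |(j1 : ℝ) - (j2 : ℝ)| := by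
      rcases Nat.lt_or_ge j1 j2 with hlt | hge
      · have hc' : (j1 + 1 : ℕ) ≤ j2 := hlt
        have hc : (j1 : ℝ) + 1 ≤ j2 := by exact_mod_cast hc'
        rw [abs_sub_comm, abs_of_nonneg (by linarith)]
        linarith
      · have hlt : j2 < j1 := lt_of_le_of_ne hge (Ne.symm hne)
        have hc' : (j2 + 1 : ℕ) ≤ j1 := hlt
        have hc : (j2 : ℝ) + 1 ≤ j1 := by exact_mod_cast hc'
        rw [abs_of_nonneg (by linarith)]
        linarith
    have hdistnodes : |(A + ((j1:ℝ) + 1) * h) - (A + ((j2:ℝ) + 1) * h)| < h := by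
      calc |(A + ((j1:ℝ) + 1) * h) - (A + ((j2:ℝ) + 1) * h)|
          ≤ |(A + ((j1:ℝ) + 1) * h) - t| + |t - (A + ((j2:ℝ) + 1) * h)| :=
            abs_sub_le _ _ _
      _ = |t - (A + ((j1:ℝ) + 1) * h)| + |t - (A + ((j2:ℝ) + 1) * h)| := by
            rw [abs_sub_comm]
      _ < δ + δ := add_lt_add hj1.2 hj2.2
      _ = h := by rw [hδdef]; ring
    have heq : (A + ((j1:ℝ) + 1) * h) - (A + ((j2:ℝ) + 1) * h)
        = ((j1 : ℝ) - j2) * h := by ring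
    rw [heq, abs_mul, abs_of_pos hh] at hdistnodes
    nlinarith
  -- arithmetic helper
  have key : ∀ a b : ℝ, 0 ≤ a → 0 < b → a ≤ b → ε * a / (4 * b) ≤ ε / 4 := by
    intro a b ha hb hab
    rw [div_le_div_iff₀ (by positivity) (by norm_num)]
    nlinarith
  have hCne : |C| ≠ 0 := ne_of_gt hCpos
  -- the three pieces
  have hconst : |g A / C * σ T₄ - g A| ≤ ε / 4 := by
    have he : g A / C * σ T₄ - g A = g A / C * (σ T₄ - C) := by
      field_simp
    rw [he, abs_mul, abs_div]
    have h1 : |g A| / |C| * |σ T₄ - C| ≤ |g A| / |C| * ε₄ := by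
      apply mul_le_mul_of_nonneg_left hβ (by positivity)
    have h2 : |g A| / |C| * ε₄ = ε * |g A| / (4 * (|g A| + 1)) := by
      rw [hε₄def]
      field_simp
    have h3 := key (|g A|) (|g A| + 1) (abs_nonneg _) (by positivity) (by linarith)
    linarith
  have hε₁4 : ε₁ ≤ ε / 4 := by
    rw [hε₁def]
    exact key (|C|) P hCpos.le hP (by rw [hPdef]; linarith)
  have hX4 : ε₁ * (M + |C|) / |C| ≤ ε / 4 := by
    have h2 : ε₁ * (M + |C|) / |C| = ε * (M + |C|) / (4 * P) := by
      rw [hε₁def]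
      field_simp
    rw [h2]
    exact key (M + |C|) P (by positivity) hP (by rw [hPdef]; linarith)
  have hY4 : (N : ℝ) * (ε₁ * ε₃ / |C|) ≤ ε / 4 := by
    have h2 : (N : ℝ) * (ε₁ * ε₃ / |C|) = ε * ε₁ / (4 * (ε₁ + 1)) := by
      rw [hε₃def]
      field_simp
    rw [h2]
    exact key ε₁ (ε₁ + 1) hε₁.le (by positivity) (by linarith)
  -- the middle (sum) piece
  have hmid : |(∑ j ∈ Finset.range N,
        d j / C * σ (lam * t + -lam * (A + ((j:ℝ) + 1) * h)))
        - (g (A + (k : ℝ) * h) - g A)|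
      ≤ ε₁ * (M + |C|) / |C| + (N : ℝ) * (ε₁ * ε₃ / |C|) := by
    rw [← hstep_sum, ← Finset.sum_sub_distrib]
    calc |∑ j ∈ Finset.range N,
          (d j / C * σ (lam * t + -lam * (A + ((j:ℝ) + 1) * h)) - d j * I j)|
        ≤ ∑ j ∈ Finset.range N,
          |d j / C * σ (lam * t + -lam * (A + ((j:ℝ) + 1) * h)) - d j * I j| :=
          Finset.abs_sum_le_sum_abs _ _
    _ ≤ ∑ j ∈ Finset.range N,
          (if |t - (A + ((j:ℝ) + 1) * h)| < δ then ε₁ * (M + |C|) / |C|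
            else ε₁ * ε₃ / |C|) := Finset.sum_le_sum hterm
    _ = ((Finset.range N).filter
          (fun j : ℕ => |t - (A + ((j:ℝ) + 1) * h)| < δ)).card
            • (ε₁ * (M + |C|) / |C|)
        + ((Finset.range N).filter
          (fun j : ℕ => ¬ |t - (A + ((j:ℝ) + 1) * h)| < δ)).card
            • (ε₁ * ε₃ / |C|) := by
          rw [Finset.sum_ite, Finset.sum_const, Finset.sum_const]
    _ ≤ ε₁ * (M + |C|) / |C| + (N : ℝ) * (ε₁ * ε₃ / |C|) := by
          apply add_le_add
          · have hc1 := hnear_card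
            calc (((Finset.range N).filter
                (fun j : ℕ => |t - (A + ((j:ℝ) + 1) * h)| < δ)).card : ℕ)
                  • (ε₁ * (M + |C|) / |C|)
                ≤ 1 • (ε₁ * (M + |C|) / |C|) := by
                  apply nsmul_le_nsmul_left (by positivity) hc1
            _ = ε₁ * (M + |C|) / |C| := one_smul _ _
          · have hc2 : ((Finset.range N).filter
                (fun j : ℕ => ¬ |t - (A + ((j:ℝ) + 1) * h)| < δ)).card ≤ N := by
              calc _ ≤ (Finset.range N).card := Finset.card_filter_le _ _
              _ = N := Finset.card_range N
            calc _ ≤ N • (ε₁ * ε₃ / |C|) := nsmul_le_nsmul_left (by positivity) hc2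
            _ = (N : ℝ) * (ε₁ * ε₃ / |C|) := by rw [nsmul_eq_mul]
  -- put everything together
  have hdecomp : g A / C * σ T₄
      + (∑ j ∈ Finset.range N,
          d j / C * σ (lam * t + -lam * (A + ((j:ℝ) + 1) * h))) - g t
      = (g A / C * σ T₄ - g A)
        + ((∑ j ∈ Finset.range N,
            d j / C * σ (lam * t + -lam * (A + ((j:ℝ) + 1) * h)))
          - (g (A + (k : ℝ) * h) - g A))
        + (g (A + (k : ℝ) * h) - g t) := by ring
  calc |g A / C * σ T₄
      + (∑ j ∈ Finset.range N,
          d j / C * σ (lam * t + -lam * (A + ((j:ℝ) + 1) * h))) - g t|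
      = |(g A / C * σ T₄ - g A)
        + ((∑ j ∈ Finset.range N,
            d j / C * σ (lam * t + -lam * (A + ((j:ℝ) + 1) * h)))
          - (g (A + (k : ℝ) * h) - g A))
        + (g (A + (k : ℝ) * h) - g t)| := by rw [hdecomp]
  _ ≤ |(g A / C * σ T₄ - g A)
        + ((∑ j ∈ Finset.range N,
            d j / C * σ (lam * t + -lam * (A + ((j:ℝ) + 1) * h)))
          - (g (A + (k : ℝ) * h) - g A))|
      + |g (A + (k : ℝ) * h) - g t| := abs_add_le _ _
  _ ≤ |g A / C * σ T₄ - g A|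
      + |(∑ j ∈ Finset.range N,
            d j / C * σ (lam * t + -lam * (A + ((j:ℝ) + 1) * h)))
          - (g (A + (k : ℝ) * h) - g A)|
      + |g (A + (k : ℝ) * h) - g t| := by
        apply add_le_add_left (abs_add_le _ _)
  _ ≤ ε / 4 + (ε₁ * (M + |C|) / |C| + (N : ℝ) * (ε₁ * ε₃ / |C|)) + ε₁ := by
        exact add_le_add (add_le_add hconst hmid) hstep_close
  _ ≤ ε := by linarith

section ApproxPart

variable {n : ℕ} (σ : ℝ → ℝ)

def Approx' (n : ℕ) (σ : ℝ → ℝ) (f : (Fin n → ℝ) → ℝ) : Prop :=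
  ∀ ε : ℝ, 0 < ε → ∃ (L : ℕ) (c : Fin L → ℝ) (p : Fin L → (Fin n → ℝ) → ℝ),
    (∀ l, ∃ (a : Fin n → ℝ) (b : ℝ), p l = fun x => (∑ i, a i * x i) + b) ∧
    ∀ x ∈ Set.Icc (0 : Fin n → ℝ) 1, |(∑ l, c l * σ (p l x)) - f x| ≤ ε

lemma approx_zero : Approx' n σ (fun _ => 0) := by
  intro ε hε
  exact ⟨0, Fin.elim0, Fin.elim0, fun l => l.elim0, fun x _ => by simp [hε.le]⟩

lemma approx_add {f g : (Fin n → ℝ) → ℝ} (hf : Approx' n σ f) (hg : Approx' n σ g) :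
    Approx' n σ (fun x => f x + g x) := by
  intro ε hε
  obtain ⟨L₁, c₁, p₁, hml₁, hb₁⟩ := hf (ε / 2) (by positivity)
  obtain ⟨L₂, c₂, p₂, hml₂, hb₂⟩ := hg (ε / 2) (by positivity)
  refine ⟨L₁ + L₂, Fin.append c₁ c₂, Fin.append p₁ p₂, ?_, ?_⟩
  · intro l
    refine Fin.addCases (fun i => ?_) (fun i => ?_) l
    · simp only [Fin.append_left]; exact hml₁ i
    · simp only [Fin.append_right]; exact hml₂ i
  · intro x hx
    have hsum : ∑ l : Fin (L₁ + L₂),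
        Fin.append c₁ c₂ l * σ (Fin.append p₁ p₂ l x)
        = (∑ l : Fin L₁, c₁ l * σ (p₁ l x)) + ∑ l : Fin L₂, c₂ l * σ (p₂ l x) := by
      rw [Fin.sum_univ_add]
      congr 1
      · apply Finset.sum_congr rfl; intro i _
        simp only [Fin.append_left]
      · apply Finset.sum_congr rfl; intro i _
        simp only [Fin.append_right]
    rw [hsum]
    have h1 := hb₁ x hx
    have h2 := hb₂ x hx
    calc |(∑ l : Fin L₁, c₁ l * σ (p₁ l x)) + (∑ l : Fin L₂, c₂ l * σ (p₂ l x))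
        - (f x + g x)|
        = |((∑ l : Fin L₁, c₁ l * σ (p₁ l x)) - f x)
          + ((∑ l : Fin L₂, c₂ l * σ (p₂ l x)) - g x)| := by ring_nf
    _ ≤ _ := abs_add_le _ _
    _ ≤ ε / 2 + ε / 2 := add_le_add h1 h2
    _ = ε := by ring
  
lemma approx_smul {f : (Fin n → ℝ) → ℝ} (r : ℝ) (hf : Approx' n σ f) :
    Approx' n σ (fun x => r * f x) := by
  intro ε hε
  obtain ⟨L, c, p, hml, hb⟩ := hf (ε / (|r| + 1)) (by positivity)
  refine ⟨L, fun l => r * c l, p, hml, ?_⟩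
  intro x hx
  have h1 := hb x hx
  have hkey : ∑ l : Fin L, r * c l * σ (p l x) - r * f x
      = r * ((∑ l : Fin L, c l * σ (p l x)) - f x) := by
    rw [mul_sub, Finset.mul_sum]
    simp only [mul_assoc]
  rw [hkey, abs_mul]
  calc |r| * |(∑ l : Fin L, c l * σ (p l x)) - f x|
      ≤ |r| * (ε / (|r| + 1)) := mul_le_mul_of_nonneg_left h1 (abs_nonneg r)
  _ ≤ ε := by
      rw [mul_div_assoc']
      rw [div_le_iff₀ (by positivity)]
      nlinarith [abs_nonneg r, hε.le]

lemma approx_sum {ι : Type*} (s : Finset ι) (q : ι → (Fin n → ℝ) → ℝ) :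
    (∀ i ∈ s, Approx' n σ (q i)) →
    Approx' n σ (fun x => ∑ i ∈ s, q i x) := by
  classical
  induction s using Finset.induction with
  | empty => intro _; simpa using approx_zero σ
  | insert j s' hns ih =>
    intro hq
    have h1 : Approx' n σ (q j) := hq j (Finset.mem_insert_self j s')
    have h2 := ih (fun i hi => hq i (Finset.mem_insert_of_mem hi))
    have := approx_add σ h1 h2
    intro ε hε
    obtain ⟨L, c, p, hml, hb⟩ := this ε hε
    refine ⟨L, c, p, hml, fun x hx => ?_⟩
    have hbb := hb x hx
    simp only [Finset.sum_insert hns]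
    exact hbb

end ApproxPart

lemma approx_ridge {n : ℕ} (σ : ℝ → ℝ) (M : ℝ) (hM : ∀ t, |σ t| ≤ M)
    (C : ℝ) (hC : C ≠ 0)
    (hbot : Filter.Tendsto σ Filter.atBot (nhds 0))
    (htop : Filter.Tendsto σ Filter.atTop (nhds C))
    (a : Fin n → ℝ) (b : ℝ) :
    Approx' n σ (fun x => Real.cos ((∑ i, a i * x i) + b)) := by
  intro ε hε
  set R : ℝ := (∑ i, |a i|) + |b| + 1 with hRdef
  have hR : 0 < R := by positivity
  obtain ⟨L, c, aa, bb, hbd⟩ := one_dim σ M hM C hC hbot htop Real.cos (-R) R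
    (by linarith) Real.continuous_cos.continuousOn ε hε
  refine ⟨L, c, fun l => fun x => (∑ i, (aa l * a i) * x i) + (aa l * b + bb l),
    fun l => ⟨fun i => aa l * a i, aa l * b + bb l, rfl⟩, ?_⟩
  intro x hx
  have hxi : ∀ i, 0 ≤ x i ∧ x i ≤ 1 := fun i => ⟨hx.1 i, hx.2 i⟩
  set t : ℝ := (∑ i, a i * x i) + b with htdef
  have htmem : t ∈ Set.Icc (-R) R := by
    have h1 : |∑ i, a i * x i| ≤ ∑ i, |a i| := by
      calc |∑ i, a i * x i| ≤ ∑ i, |a i * x i| := Finset.abs_sum_le_sum_abs _ _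
      _ ≤ ∑ i, |a i| := by
          apply Finset.sum_le_sum
          intro i _
          rw [abs_mul]
          have hxa : |x i| ≤ 1 := abs_le.mpr ⟨by linarith [(hxi i).1], (hxi i).2⟩
          calc |a i| * |x i| ≤ |a i| * 1 :=
                mul_le_mul_of_nonneg_left hxa (abs_nonneg _)
          _ = |a i| := mul_one _
    have h2 : |t| ≤ (∑ i, |a i|) + |b| := by
      rw [htdef]
      exact (abs_add_le _ _).trans (add_le_add_left h1 _)
    have := abs_le.mp h2
    constructor <;> [linarith [this.1]; linarith [this.2]]
  have hp : ∀ l : Fin L,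
      (∑ i, (aa l * a i) * x i) + (aa l * b + bb l) = aa l * t + bb l := by
    intro l
    have hms : ∑ i, (aa l * a i) * x i = aa l * ∑ i, a i * x i := by
      rw [Finset.mul_sum]
      exact Finset.sum_congr rfl fun i _ => by ring
    rw [hms, htdef]
    ring
  have hsum : ∑ l : Fin L, c l * σ ((∑ i, (aa l * a i) * x i) + (aa l * b + bb l))
      = ∑ l : Fin L, c l * σ (aa l * t + bb l) :=
    Finset.sum_congr rfl fun l _ => by rw [hp l]
  show |(∑ l : Fin L, c l * σ ((∑ i, (aa l * a i) * x i) + (aa l * b + bb l)))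
      - Real.cos t| ≤ ε
  rw [hsum]
  exact hbd t htmem

noncomputable def ridge (n : ℕ) (a : Fin n → ℝ) (b : ℝ) :
    C(Set.Icc (0 : Fin n → ℝ) 1, ℝ) :=
  ⟨fun x => Real.cos ((∑ i, a i * (x : Fin n → ℝ) i) + b), by
    apply Real.continuous_cos.comp
    apply Continuous.add _ continuous_const
    apply continuous_finset_sum
    intro i _
    exact continuous_const.mul ((continuous_apply i).comp continuous_subtype_val)⟩

def ridgeSet (n : ℕ) : Set C(Set.Icc (0 : Fin n → ℝ) 1, ℝ) :=
  {φ | ∃ a b, φ = ridge n a b}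

lemma ridge_mul {n : ℕ} (a a' : Fin n → ℝ) (b b' : ℝ) :
    ridge n a b * ridge n a' b' =
      (1/2 : ℝ) • ridge n (a + a') (b + b') + (1/2 : ℝ) • ridge n (a - a') (b - b') := by
  ext x
  simp only [ContinuousMap.mul_apply, ContinuousMap.add_apply, ContinuousMap.smul_apply,
    smul_eq_mul, ridge, ContinuousMap.coe_mk]
  have h1 : ∑ i, (a + a') i * (x : Fin n → ℝ) i
      = (∑ i, a i * (x : Fin n → ℝ) i) + ∑ i, a' i * (x : Fin n → ℝ) i := by
    rw [← Finset.sum_add_distrib]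
    exact Finset.sum_congr rfl fun i _ => by rw [Pi.add_apply]; ring
  have h2 : ∑ i, (a - a') i * (x : Fin n → ℝ) i
      = (∑ i, a i * (x : Fin n → ℝ) i) - ∑ i, a' i * (x : Fin n → ℝ) i := by
    rw [← Finset.sum_sub_distrib]
    exact Finset.sum_congr rfl fun i _ => by rw [Pi.sub_apply]; ring
  rw [h1, h2]
  have key : ∀ u v : ℝ, Real.cos u * Real.cos v
      = 1/2 * Real.cos (u + v) + 1/2 * Real.cos (u - v) := by
    intro u v
    rw [Real.cos_add, Real.cos_sub]
    ring
  have e1 : (∑ i, a i * (x : Fin n → ℝ) i) + (∑ i, a' i * (x : Fin n → ℝ) i) + (b + b')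
      = ((∑ i, a i * (x : Fin n → ℝ) i) + b) + ((∑ i, a' i * (x : Fin n → ℝ) i) + b') := by
    ring
  have e2 : (∑ i, a i * (x : Fin n → ℝ) i) - (∑ i, a' i * (x : Fin n → ℝ) i) + (b - b')
      = ((∑ i, a i * (x : Fin n → ℝ) i) + b) - ((∑ i, a' i * (x : Fin n → ℝ) i) + b') := by
    ring
  rw [e1, e2, key]

lemma ridge_one {n : ℕ} : (1 : C(Set.Icc (0 : Fin n → ℝ) 1, ℝ)) = ridge n 0 0 := by
  ext x
  simp [ridge]

lemma ridge_span_mul {n : ℕ} (g h' : C(Set.Icc (0 : Fin n → ℝ) 1, ℝ))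
    (hg : g ∈ Submodule.span ℝ (ridgeSet n))
    (hh : h' ∈ Submodule.span ℝ (ridgeSet n)) :
    g * h' ∈ Submodule.span ℝ (ridgeSet n) := by
  induction hg using Submodule.span_induction with
  | mem φ hφ =>
    induction hh using Submodule.span_induction with
    | mem ψ hψ =>
      obtain ⟨a, b, rfl⟩ := hφ
      obtain ⟨a', b', rfl⟩ := hψ
      rw [ridge_mul]
      exact add_mem
        (Submodule.smul_mem _ _ (Submodule.subset_span ⟨_, _, rfl⟩))
        (Submodule.smul_mem _ _ (Submodule.subset_span ⟨_, _, rfl⟩))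
    | zero => rw [mul_zero]; exact zero_mem _
    | add x y hx hy px py => rw [mul_add]; exact add_mem px py
    | smul r x hx px => rw [mul_smul_comm]; exact Submodule.smul_mem _ _ px
  | zero => rw [zero_mul]; exact zero_mem _
  | add x y hx hy px py => rw [add_mul]; exact add_mem px py
  | smul r x hx px => rw [smul_mul_assoc]; exact Submodule.smul_mem _ _ px

lemma ridge_adjoin_le {n : ℕ} (g : C(Set.Icc (0 : Fin n → ℝ) 1, ℝ))
    (hg : g ∈ Algebra.adjoin ℝ (ridgeSet n)) :
    g ∈ Submodule.span ℝ (ridgeSet n) := by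
  induction hg using Algebra.adjoin_induction with
  | mem φ hφ => exact Submodule.subset_span hφ
  | algebraMap r =>
    rw [Algebra.algebraMap_eq_smul_one, ridge_one]
    exact Submodule.smul_mem _ _ (Submodule.subset_span ⟨0, 0, rfl⟩)
  | add x y hx hy px py => exact add_mem px py
  | mul x y hx hy px py => exact ridge_span_mul _ _ px py

lemma ridge_separates {n : ℕ} :
    (Algebra.adjoin ℝ (ridgeSet n)).SeparatesPoints := by
  intro x y hxy
  have hne : ∃ i, (x : Fin n → ℝ) i ≠ (y : Fin n → ℝ) i := by
    by_contra hc
    push_neg at hc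
    exact hxy (Subtype.ext (funext hc))
  obtain ⟨i, hi⟩ := hne
  refine ⟨ridge n (fun j => if j = i then 1 else 0) (Real.pi / 2),
    ⟨_, Algebra.subset_adjoin ⟨_, _, rfl⟩, rfl⟩, ?_⟩
  have hval : ∀ z : Set.Icc (0 : Fin n → ℝ) 1,
      ridge n (fun j => if j = i then 1 else 0) (Real.pi / 2) z
        = -Real.sin ((z : Fin n → ℝ) i) := by
    intro z
    have hs : ∑ j, (if j = i then (1:ℝ) else 0) * (z : Fin n → ℝ) j
        = (z : Fin n → ℝ) i := by
      rw [Finset.sum_eq_single i]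
      · simp
      · intro j _ hj; simp [hj]
      · intro hii; exact absurd (Finset.mem_univ i) hii
    simp only [ridge, ContinuousMap.coe_mk]
    rw [hs, Real.cos_add_pi_div_two]
  rw [hval x, hval y]
  intro hcon
  apply hi
  have hsin : Real.sin ((x : Fin n → ℝ) i) = Real.sin ((y : Fin n → ℝ) i) := by
    linarith [hcon]
  have hpi : (1 : ℝ) ≤ Real.pi / 2 := by
    have := Real.pi_gt_three
    linarith
  have hmemx : (x : Fin n → ℝ) i ∈ Set.Icc (-(Real.pi/2)) (Real.pi/2) := by
    have h0 : (0:ℝ) ≤ (x : Fin n → ℝ) i := x.2.1 i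
    have h1 : (x : Fin n → ℝ) i ≤ 1 := x.2.2 i
    constructor <;> [linarith; linarith]
  have hmemy : (y : Fin n → ℝ) i ∈ Set.Icc (-(Real.pi/2)) (Real.pi/2) := by
    have h0 : (0:ℝ) ≤ (y : Fin n → ℝ) i := y.2.1 i
    have h1 : (y : Fin n → ℝ) i ≤ 1 := y.2.2 i
    constructor <;> [linarith; linarith]
  exact Real.injOn_sin hmemx hmemy hsin

/-- universal approximation by activated MPS. For any continuous bounded
sigmoidal `σ` with `σ → 0` at `-∞` and `σ → C ≠ 0` at `+∞`, the class
`{x ↦ Σ_l c_l σ(p_l x)}` (with `p_l` multilinear polynomials) is dense in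
`C([0,1]ⁿ, ℝ)` for the supremum norm. -/
theorem activated_mps_dense_in_continuous_functions (n : ℕ) (σ : ℝ → ℝ)
    (hσc : Continuous σ) (hσb : ∃ M, ∀ t, |σ t| ≤ M) (C : ℝ) (hC : C ≠ 0)
    (hbot : Filter.Tendsto σ Filter.atBot (nhds 0))
    (htop : Filter.Tendsto σ Filter.atTop (nhds C))
    (f : (Fin n → ℝ) → ℝ) (hf : ContinuousOn f (Set.Icc 0 1))
    (ε : ℝ) (hε : 0 < ε) :
    ∃ (L : ℕ) (c : Fin L → ℝ) (p : Fin L → (Fin n → ℝ) → ℝ),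
      (∀ l, IsMultilinearPoly (p l)) ∧
      ∀ x ∈ Set.Icc (0 : Fin n → ℝ) 1,
        |(∑ l : Fin L, c l * σ (p l x)) - f x| < ε := by
  obtain ⟨M, hM⟩ := hσb
  haveI : CompactSpace ↥(Set.Icc (0 : Fin n → ℝ) 1) :=
    isCompact_iff_compactSpace.mp isCompact_Icc
  have hSW := ContinuousMap.subalgebra_topologicalClosure_eq_top_of_separatesPoints
    (Algebra.adjoin ℝ (ridgeSet n)) ridge_separates
  set f' : C(Set.Icc (0 : Fin n → ℝ) 1, ℝ) :=
    ⟨(Set.Icc (0 : Fin n → ℝ) 1).restrict f, hf.restrict⟩ with hf'def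
  have hf'mem : f' ∈ closure ((Algebra.adjoin ℝ (ridgeSet n)) : Set _) := by
    have h1 : f' ∈ (Algebra.adjoin ℝ (ridgeSet n)).topologicalClosure := by
      rw [hSW]; exact Algebra.mem_top
    rw [← SetLike.mem_coe, Subalgebra.topologicalClosure_coe] at h1
    exact h1
  obtain ⟨g, hgA, hgdist⟩ := Metric.mem_closure_iff.mp hf'mem (ε / 2) (by positivity)
  have hgspan := ridge_adjoin_le g hgA
  obtain ⟨m, cf, v, hvsum⟩ := Submodule.mem_span_set'.mp hgspan
  have hv : ∀ i : Fin m, ∃ a b, (v i : C(Set.Icc (0 : Fin n → ℝ) 1, ℝ)) = ridge n a b :=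
    fun i => (v i).2
  choose av bv hvab using hv
  have happrox : Approx' n σ
      (fun x => ∑ i : Fin m, cf i * Real.cos ((∑ j, av i j * x j) + bv i)) := by
    apply approx_sum
    intro i _
    exact approx_smul σ (cf i) (approx_ridge σ M hM C hC hbot htop (av i) (bv i))
  obtain ⟨L, c, p, hml', hb⟩ := happrox (ε / 4) (by positivity)
  refine ⟨L, c, p, ?_, ?_⟩
  · intro l
    obtain ⟨a, b, hpl⟩ := hml' l
    rw [hpl]
    exact mlp_affine a b
  · intro x hx
    have h1 := hb x hx
    have h2 : g ⟨x, hx⟩ = ∑ i : Fin m, cf i * Real.cos ((∑ j, av i j * x j) + bv i) := by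
      rw [← hvsum, ContinuousMap.sum_apply]
      apply Finset.sum_congr rfl
      intro i _
      rw [ContinuousMap.smul_apply, hvab i]
      simp [ridge, smul_eq_mul]
    have h3 : |g ⟨x, hx⟩ - f x| < ε / 2 := by
      have hd := ContinuousMap.dist_apply_le_dist (f := f') (g := g) ⟨x, hx⟩
      have hfx : f' ⟨x, hx⟩ = f x := rfl
      rw [Real.dist_eq, hfx] at hd
      calc |g ⟨x, hx⟩ - f x| = |f x - g ⟨x, hx⟩| := abs_sub_comm _ _
      _ ≤ dist f' g := hd
      _ < ε / 2 := hgdist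
    calc |(∑ l : Fin L, c l * σ (p l x)) - f x|
        ≤ |(∑ l : Fin L, c l * σ (p l x))
            - (∑ i : Fin m, cf i * Real.cos ((∑ j, av i j * x j) + bv i))|
          + |(∑ i : Fin m, cf i * Real.cos ((∑ j, av i j * x j) + bv i)) - f x| :=
          abs_sub_le _ _ _
    _ < ε := by
        have h4 : |(∑ i : Fin m, cf i * Real.cos ((∑ j, av i j * x j) + bv i)) - f x|
            < ε / 2 := by rw [← h2]; exact h3
        linarith
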